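/- (Lemma E.5, generic look-back run-length accumulation) Let χ ∈ (0,1] and δ ∈ (0,1). Let {G_i}_{i≥0} be a filtration, {X_i} a [0,1]-valued process with each X_i G_i-measurable, and {L_i} a process of integers ≥ 1 with each L_i G_{i+1}-measurable and satisfying P(L_i > 1 + k | G_i) ≤ (1 − χ/2)^k for every integer k ≥ 0. Then with probability at least 1 − δ, for all n: Σ_{i≤n} L_i X_i ≤ (5/χ)·( Σ_{i≤n} X_i + log(1/δ) ). -/

import Mathlib

open MeasureTheory Finset
open scoped ENNReal NNReal

private lemma rla_exp_cubic_bound {l : ℝ} (h0 : 0 ≤ l) (h1 : l ≤ 1/5) :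
    Real.exp l ≤ 1 + l + l^2/2 + (2/9)*l^3 := by
  have := Real.exp_bound' h0 (h1.trans (by norm_num)) (n := 3) (by norm_num)
  simp [Finset.sum_range_succ, Nat.factorial] at this
  nlinarith [this]

private lemma rla_num_core {l : ℝ} (h0 : 0 < l) (h1 : l ≤ 1/5) :
    0 < 1 - Real.exp l * (1 - 5*l/2) ∧ Real.exp l * (1 - 5*l/2) < 1 ∧ 0 ≤ 1 - 5*l/2 ∧
    Real.exp l + Real.exp l * (Real.exp l - 1) / (1 - Real.exp l * (1 - 5*l/2)) ≤ 2 := by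
  set t := Real.exp l with ht
  have hub : t ≤ 1 + l + l^2/2 + (2/9)*l^3 := rla_exp_cubic_bound h0.le h1
  have hlb : 1 + l ≤ t := by have := Real.add_one_le_exp l; linarith
  have hq0 : (0:ℝ) ≤ 1 - 5*l/2 := by nlinarith
  have hden : 1 - t*(1-5*l/2) ≥ 3/2*l + 2*l^2 := by nlinarith
  have hdenpos : 0 < 1 - t*(1-5*l/2) := by nlinarith
  refine ⟨hdenpos, by linarith, hq0, ?_⟩
  have h2t : t ≤ 2 := by nlinarith
  have key : t*(t-1) ≤ (2 - t) * (3/2*l + 2*l^2) := by nlinarith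
  have key2 : t*(t-1) ≤ (2 - t) * (1 - t*(1-5*l/2)) := by
    nlinarith [mul_le_mul_of_nonneg_left hden (by nlinarith : (0:ℝ) ≤ 2 - t)]
  have : t * (t - 1) / (1 - t * (1 - 5*l/2)) ≤ 2 - t := by
    rw [div_le_iff₀ hdenpos]; linarith [key2]
  linarith

/-- **Generic look-back run-length accumulation (Lemma E.5).** Let `{X_i}` be a `[0,1]`-valued
process adapted to a filtration `{G_i}` and `{L_i}` positive-integer-valued with `L_i`
`G_{i+1}`-measurable and conditionally stochastically dominated by `1` plus a geometric
random variable of success probability `χ/2`, i.e. `P(L_i > 1 + k | G_i) ≤ (1 − χ/2)^k`.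
Then with probability at least `1 − δ`, for every `n`,
`∑_{i≤n} L_i X_i ≤ (5/χ)(∑_{i≤n} X_i + log(1/δ))`. -/
theorem run_length_accumulation {Ω : Type*} [mΩ : MeasurableSpace Ω]
    (ℙ : Measure Ω) [IsProbabilityMeasure ℙ]
    (χ δ : ℝ) (hχ : χ ∈ Set.Ioc (0 : ℝ) 1) (hδ : δ ∈ Set.Ioo (0 : ℝ) 1)
    (G : Filtration ℕ mΩ)
    (X : ℕ → Ω → ℝ) (hX01 : ∀ i ω, X i ω ∈ Set.Icc (0 : ℝ) 1)
    (hXmeas : ∀ i, Measurable[G i] (X i))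
    (L : ℕ → Ω → ℕ) (hL1 : ∀ i ω, 1 ≤ L i ω)
    (hLmeas : ∀ i, Measurable[G (i + 1)] (L i))
    (hgeo : ∀ i k : ℕ,
      ℙ[Set.indicator {ω | 1 + k < L i ω} (fun _ => (1 : ℝ)) | G i]
        ≤ᵐ[ℙ] fun _ => (1 - χ / 2) ^ k) :
    ENNReal.ofReal (1 - δ)
      ≤ ℙ {ω | ∀ n : ℕ,
          ∑ i ∈ Finset.range (n + 1), (L i ω : ℝ) * X i ω
            ≤ (5 / χ) * (∑ i ∈ Finset.range (n + 1), X i ω + Real.log (1 / δ))} := by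
  obtain ⟨hχ0, hχ1⟩ := hχ
  obtain ⟨hδ0, hδ1⟩ := hδ
  set lam : ℝ := χ / 5 with hlam_def
  have hlam0 : 0 < lam := by positivity
  have hlam15 : lam ≤ 1/5 := by rw [hlam_def]; linarith
  obtain ⟨hdenpos, hr1, hq0, hM2⟩ := rla_num_core hlam0 hlam15
  have hq_eq : 1 - 5 * lam / 2 = 1 - χ / 2 := by rw [hlam_def]; ring
  rw [hq_eq] at hdenpos hr1 hq0 hM2
  set q : ℝ := 1 - χ / 2 with hq_def
  set el : ℝ := Real.exp lam with hel_def
  have hel1 : 1 ≤ el := by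
    rw [hel_def]; have := Real.add_one_le_exp lam; linarith
  have hel0 : 0 < el := lt_of_lt_of_le one_pos hel1
  -- measurability of L (w.r.t. ambient σ-algebra)
  have hLm : ∀ i, Measurable (L i) := fun i => (hLmeas i).mono (G.le (i+1)) le_rfl
  have hLcast : ∀ i, Measurable (fun ω => (L i ω : ℝ)) := fun i =>
    measurable_from_top.comp (hLm i)
  have hXm : ∀ i, Measurable (X i) := fun i => (hXmeas i).mono (G.le i) le_rfl
  have hSmeas : ∀ i k : ℕ, MeasurableSet {ω | 1 + k < L i ω} := fun i k =>
    (hLm i) (show MeasurableSet {n : ℕ | 1 + k < n} from trivial)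
  -- TAIL estimate generalized to all G i - measurable nonnegative weights
  have tail : ∀ (i k : ℕ) (h : Ω → ℝ≥0∞), Measurable[G i] h →
      ∫⁻ ω in {ω | 1 + k < L i ω}, h ω ∂ℙ ≤ ENNReal.ofReal (q ^ k) * ∫⁻ ω, h ω ∂ℙ := by
    intro i k h hh
    set S := {ω | 1 + k < L i ω} with hS
    have hSm : MeasurableSet S := hSmeas i k
    have hqk0 : 0 ≤ q ^ k := pow_nonneg hq0 k
    have hmeasle : ∀ A : Set Ω, MeasurableSet[G i] A →
        ℙ (A ∩ S) ≤ ENNReal.ofReal (q ^ k) * ℙ A := by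
      intro A hA
      have hAm : MeasurableSet A := G.le i A hA
      have hind : Integrable (S.indicator (fun _ => (1:ℝ))) ℙ :=
        (integrable_const (1:ℝ)).indicator hSm
      have h1 : ∫ ω in A, S.indicator (fun _ => (1:ℝ)) ω ∂ℙ = (ℙ (A ∩ S)).toReal := by
        rw [setIntegral_indicator hSm]
        simp
        rfl
      have h2 : ∫ ω in A, S.indicator (fun _ => (1:ℝ)) ω ∂ℙ
          = ∫ ω in A, (ℙ[S.indicator (fun _ => (1:ℝ))|G i]) ω ∂ℙ :=
        (setIntegral_condExp (G.le i) hind hA).symm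
      have h3 : ∫ ω in A, (ℙ[S.indicator (fun _ => (1:ℝ))|G i]) ω ∂ℙ
          ≤ ∫ ω in A, q ^ k ∂ℙ :=
        setIntegral_mono_ae integrable_condExp.integrableOn
          (integrable_const _).integrableOn (hgeo i k)
      have h4 : ∫ ω in A, q ^ k ∂ℙ = q ^ k * (ℙ A).toReal := by
        rw [setIntegral_const]; rw [smul_eq_mul, mul_comm]; rfl
      have h5 : (ℙ (A ∩ S)).toReal ≤ q ^ k * (ℙ A).toReal := by
        rw [← h1, h2]; rw [h4] at h3; exact h3
      calc ℙ (A ∩ S) = ENNReal.ofReal ((ℙ (A ∩ S)).toReal) :=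
            (ENNReal.ofReal_toReal (measure_ne_top _ _)).symm
        _ ≤ ENNReal.ofReal (q ^ k * (ℙ A).toReal) := ENNReal.ofReal_le_ofReal h5
        _ = ENNReal.ofReal (q ^ k) * ℙ A := by
            rw [ENNReal.ofReal_mul hqk0, ENNReal.ofReal_toReal (measure_ne_top _ _)]
    have htrim : (ℙ.restrict S).trim (G.le i) ≤ ((ENNReal.ofReal (q ^ k)) • ℙ).trim (G.le i) := by
      refine Measure.le_iff.2 fun A hA => ?_
      rw [trim_measurableSet_eq _ hA, trim_measurableSet_eq _ hA,
        Measure.restrict_apply (G.le i A hA), Measure.smul_apply, smul_eq_mul]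
      exact hmeasle A hA
    calc ∫⁻ ω in S, h ω ∂ℙ
        = ∫⁻ ω, h ω ∂((ℙ.restrict S).trim (G.le i)) := (lintegral_trim (G.le i) hh).symm
      _ ≤ ∫⁻ ω, h ω ∂(((ENNReal.ofReal (q ^ k)) • ℙ).trim (G.le i)) :=
          lintegral_mono' htrim le_rfl
      _ = ∫⁻ ω, h ω ∂((ENNReal.ofReal (q ^ k)) • ℙ) := lintegral_trim (G.le i) hh
      _ = ENNReal.ofReal (q ^ k) * ∫⁻ ω, h ω ∂ℙ := lintegral_smul_measure _ _
  -- the one-step multiplicative increments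
  set Y : ℕ → Ω → ℝ := fun i ω => Real.exp (lam * ((L i ω : ℝ) * X i ω) - X i ω) with hY_def
  have hYpos : ∀ i ω, 0 < Y i ω := fun i ω => Real.exp_pos _
  have hYmeasG : ∀ i, Measurable[G (i+1)] (Y i) := by
    intro i
    have hXi : Measurable[G (i+1)] (X i) := (hXmeas i).mono (G.mono (Nat.le_succ i)) le_rfl
    have hLi : Measurable[G (i+1)] (fun ω => (L i ω : ℝ)) :=
      measurable_from_top.comp (hLmeas i)
    exact Real.measurable_exp.comp ((measurable_const.mul (hLi.mul hXi)).sub hXi)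
  -- KEY estimate
  have key : ∀ (i : ℕ) (h : Ω → ℝ≥0∞), Measurable[G i] h →
      ∫⁻ ω, h ω * ENNReal.ofReal (Y i ω) ∂ℙ ≤ ∫⁻ ω, h ω ∂ℙ := by
    intro i h hh
    have hhm : Measurable h := hh.mono (G.le i) le_rfl
    have hx0 : ∀ ω, 0 ≤ X i ω := fun ω => (hX01 i ω).1
    have hx1 : ∀ ω, X i ω ≤ 1 := fun ω => (hX01 i ω).2
    set a : Ω → ℝ := fun ω => Real.exp (-X i ω) * (1 - X i ω + X i ω * el) with ha_def
    set b : Ω → ℝ := fun ω => Real.exp (-X i ω) * (X i ω * el * (el - 1)) with hb_def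
    have ha0 : ∀ ω, 0 ≤ a ω := by
      intro ω
      apply mul_nonneg (Real.exp_pos _).le
      nlinarith [hx0 ω, hx1 ω]
    have hb0 : ∀ ω, 0 ≤ b ω := by
      intro ω
      apply mul_nonneg (Real.exp_pos _).le
      apply mul_nonneg (mul_nonneg (hx0 ω) hel0.le); linarith
    have hameasG : Measurable[G i] a :=
      ((Real.measurable_exp.comp (hXmeas i).neg).mul
        (((measurable_const.sub (hXmeas i)).add ((hXmeas i).mul measurable_const))))
    have hbmeasG : Measurable[G i] b :=
      ((Real.measurable_exp.comp (hXmeas i).neg).mul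
        (((hXmeas i).mul measurable_const).mul measurable_const))
    have hcoef : ∀ ω, a ω + (1 - el * q)⁻¹ * b ω ≤ 1 := by
      intro ω
      have hmul : X i ω * (el + el * (el - 1) / (1 - el * q)) ≤ X i ω * 2 :=
        mul_le_mul_of_nonneg_left hM2 (hx0 ω)
      have h1 : a ω + (1 - el * q)⁻¹ * b ω
          = Real.exp (-X i ω) * (1 - X i ω + X i ω * (el + el * (el - 1) / (1 - el * q))) := by
        rw [ha_def, hb_def]; field_simp; ring
      rw [h1]
      have h2 : 1 - X i ω + X i ω * (el + el * (el - 1) / (1 - el * q)) ≤ 1 + X i ω := by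
        nlinarith [hmul]
      calc Real.exp (-X i ω) * (1 - X i ω + X i ω * (el + el * (el - 1) / (1 - el * q)))
          ≤ Real.exp (-X i ω) * (1 + X i ω) :=
            mul_le_mul_of_nonneg_left h2 (Real.exp_pos _).le
        _ ≤ 1 := by
            rw [Real.exp_neg]
            rw [inv_mul_le_iff₀ (Real.exp_pos _)]
            have := Real.add_one_le_exp (X i ω)
            linarith
    set g : ℕ → Ω → ℝ≥0∞ :=
      fun k => Set.indicator {ω | 1 + k < L i ω} (fun _ => ENNReal.ofReal (el ^ k)) with hg_def
    have hgmeas : ∀ k, Measurable (g k) := fun k =>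
      measurable_const.indicator (hSmeas i k)
    -- pointwise series bound
    have hpoint : ∀ ω, ENNReal.ofReal (Y i ω)
        ≤ ENNReal.ofReal (a ω) + ENNReal.ofReal (b ω) * ∑' k, g k ω := by
      intro ω
      have hl1 : 1 ≤ L i ω := hL1 i ω
      have hsum_eq : ∑' k, g k ω = ENNReal.ofReal (∑ k ∈ range (L i ω - 1), el ^ k) := by
        rw [tsum_eq_sum (s := range (L i ω - 1))
          (fun k hk => by
            have hnot : ¬ (1 + k < L i ω) := by
              simp only [Finset.mem_range, not_lt] at hk; omega
            simp [hg_def, Set.indicator_of_notMem, hnot])]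
        rw [ENNReal.ofReal_sum_of_nonneg (fun k _ => pow_nonneg hel0.le k)]
        refine Finset.sum_congr rfl fun k hk => ?_
        have hin : 1 + k < L i ω := by
          simp only [Finset.mem_range] at hk; omega
        simp [hg_def, Set.indicator_of_mem, hin]
      rw [hsum_eq, ← ENNReal.ofReal_mul (hb0 ω),
        ← ENNReal.ofReal_add (ha0 ω)
          (mul_nonneg (hb0 ω) (Finset.sum_nonneg fun k _ => pow_nonneg hel0.le k))]
      apply ENNReal.ofReal_le_ofReal
      -- the real inequality
      have hgeom : ∀ m : ℕ, el ^ m = 1 + (el - 1) * ∑ k ∈ range m, el ^ k := by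
        intro m
        have h := geom_sum_mul el m
        linear_combination -h
      have hconv : Real.exp (X i ω * (lam * (L i ω : ℝ)))
          ≤ (1 - X i ω) + X i ω * Real.exp (lam * (L i ω : ℝ)) := by
        have h := convexOn_exp.2 (Set.mem_univ (0:ℝ)) (Set.mem_univ (lam * (L i ω : ℝ)))
          (show (0:ℝ) ≤ 1 - X i ω by linarith [hx1 ω]) (hx0 ω)
          (show (1 - X i ω) + X i ω = 1 by ring)
        simpa [smul_eq_mul] using h
      have hexp_split : Real.exp (lam * (L i ω : ℝ)) = el * el ^ (L i ω - 1) := by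
        rw [hel_def, ← Real.exp_nat_mul, ← Real.exp_add]
        congr 1
        have hcast : ((L i ω : ℝ)) = 1 + ((L i ω - 1 : ℕ) : ℝ) := by
          rw [Nat.cast_sub hl1]; ring
        rw [hcast]; ring
      have hY_eq : Y i ω = Real.exp (-X i ω) * Real.exp (X i ω * (lam * (L i ω : ℝ))) := by
        rw [hY_def, ← Real.exp_add]; ring_nf
      calc Y i ω = Real.exp (-X i ω) * Real.exp (X i ω * (lam * (L i ω : ℝ))) := hY_eq
        _ ≤ Real.exp (-X i ω) * ((1 - X i ω) + X i ω * Real.exp (lam * (L i ω : ℝ))) :=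
            mul_le_mul_of_nonneg_left hconv (Real.exp_pos _).le
        _ = a ω + b ω * ∑ k ∈ range (L i ω - 1), el ^ k := by
            rw [hexp_split, hgeom (L i ω - 1), ha_def, hb_def]; ring
    -- now integrate
    have hbmeas : Measurable b := hbmeasG.mono (G.le i) le_rfl
    have hameas : Measurable a := hameasG.mono (G.le i) le_rfl
    have hhb : Measurable (fun ω => h ω * ENNReal.ofReal (b ω)) :=
      hhm.mul (ENNReal.measurable_ofReal.comp hbmeas)
    have hha : Measurable (fun ω => h ω * ENNReal.ofReal (a ω)) :=
      hhm.mul (ENNReal.measurable_ofReal.comp hameas)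
    have hhbG : Measurable[G i] (fun ω => h ω * ENNReal.ofReal (b ω)) :=
      hh.mul (ENNReal.measurable_ofReal.comp hbmeasG)
    have hr0 : 0 ≤ el * q := mul_nonneg hel0.le hq0
    have hIb : ∀ k : ℕ, ∫⁻ ω, (h ω * ENNReal.ofReal (b ω)) * g k ω ∂ℙ
        ≤ ENNReal.ofReal ((el * q) ^ k) * ∫⁻ ω, h ω * ENNReal.ofReal (b ω) ∂ℙ := by
      intro k
      have heq : (fun ω => (h ω * ENNReal.ofReal (b ω)) * g k ω)
          = Set.indicator {ω' | 1 + k < L i ω'}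
            (fun ω' => ENNReal.ofReal (el ^ k) * (h ω' * ENNReal.ofReal (b ω'))) := by
        funext ω
        by_cases hω : ω ∈ {ω' | 1 + k < L i ω'}
        · simp [hg_def, Set.indicator_of_mem, hω, mul_comm]
        · simp [hg_def, Set.indicator_of_notMem, hω]
      rw [heq, lintegral_indicator (hSmeas i k) _,
        lintegral_const_mul _ hhb]
      calc ENNReal.ofReal (el ^ k) * ∫⁻ ω in {ω' | 1 + k < L i ω'}, h ω * ENNReal.ofReal (b ω) ∂ℙ
          ≤ ENNReal.ofReal (el ^ k) *
            (ENNReal.ofReal (q ^ k) * ∫⁻ ω, h ω * ENNReal.ofReal (b ω) ∂ℙ) :=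
            mul_le_mul_right (tail i k _ hhbG) _
        _ = ENNReal.ofReal ((el * q) ^ k) * ∫⁻ ω, h ω * ENNReal.ofReal (b ω) ∂ℙ := by
            rw [← mul_assoc, ← ENNReal.ofReal_mul (pow_nonneg hel0.le k), ← mul_pow]
    have hgeo_sum : ∑' k : ℕ, ENNReal.ofReal ((el * q) ^ k)
        = ENNReal.ofReal ((1 - el * q)⁻¹) := by
      rw [← ENNReal.ofReal_tsum_of_nonneg (fun k => pow_nonneg hr0 k)
        (summable_geometric_of_lt_one hr0 hr1)]
      rw [tsum_geometric_of_lt_one hr0 hr1]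
    calc ∫⁻ ω, h ω * ENNReal.ofReal (Y i ω) ∂ℙ
        ≤ ∫⁻ ω, (h ω * ENNReal.ofReal (a ω)
            + ∑' k, (h ω * ENNReal.ofReal (b ω)) * g k ω) ∂ℙ := by
          apply lintegral_mono; intro ω
          calc h ω * ENNReal.ofReal (Y i ω)
              ≤ h ω * (ENNReal.ofReal (a ω) + ENNReal.ofReal (b ω) * ∑' k, g k ω) :=
                mul_le_mul_right (hpoint ω) _
            _ = h ω * ENNReal.ofReal (a ω) + ∑' k, (h ω * ENNReal.ofReal (b ω)) * g k ω := by
                rw [mul_add]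
                congr 1
                rw [← mul_assoc, ← ENNReal.tsum_mul_left]
      _ = ∫⁻ ω, h ω * ENNReal.ofReal (a ω) ∂ℙ
            + ∑' k, ∫⁻ ω, (h ω * ENNReal.ofReal (b ω)) * g k ω ∂ℙ := by
          rw [lintegral_add_left hha]
          rw [lintegral_tsum (f := fun k ω => (h ω * ENNReal.ofReal (b ω)) * g k ω) (fun k => (hhb.mul (hgmeas k)).aemeasurable)]
      _ ≤ ∫⁻ ω, h ω * ENNReal.ofReal (a ω) ∂ℙ
            + ∑' k, ENNReal.ofReal ((el * q) ^ k) * ∫⁻ ω, h ω * ENNReal.ofReal (b ω) ∂ℙ := by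
          exact add_le_add_right (ENNReal.tsum_le_tsum hIb) _
      _ = ∫⁻ ω, h ω * ENNReal.ofReal (a ω) ∂ℙ
            + ENNReal.ofReal ((1 - el * q)⁻¹) * ∫⁻ ω, h ω * ENNReal.ofReal (b ω) ∂ℙ := by
          rw [ENNReal.tsum_mul_right, hgeo_sum]
      _ = ∫⁻ ω, (h ω * ENNReal.ofReal (a ω)
            + h ω * ENNReal.ofReal ((1 - el * q)⁻¹ * b ω)) ∂ℙ := by
          rw [lintegral_add_left hha]
          congr 1
          rw [← lintegral_const_mul _ hhb]
          apply lintegral_congr; intro ω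
          rw [ENNReal.ofReal_mul (by positivity : (0:ℝ) ≤ (1 - el * q)⁻¹)]
          ring
      _ ≤ ∫⁻ ω, h ω ∂ℙ := by
          apply lintegral_mono; intro ω
          calc h ω * ENNReal.ofReal (a ω) + h ω * ENNReal.ofReal ((1 - el * q)⁻¹ * b ω)
              = h ω * ENNReal.ofReal (a ω + (1 - el * q)⁻¹ * b ω) := by
                rw [← mul_add, ← ENNReal.ofReal_add (ha0 ω)
                  (mul_nonneg (by positivity) (hb0 ω))]
            _ ≤ h ω * 1 := by
                apply mul_le_mul_right
                rw [← ENNReal.ofReal_one]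
                exact ENNReal.ofReal_le_ofReal (hcoef ω)
            _ = h ω := mul_one _
  -- the supermartingale
  set M : ℕ → Ω → ℝ := fun n ω => ∏ i ∈ range n, Y i ω with hM_def
  have hMpos : ∀ n ω, 0 < M n ω := fun n ω => Finset.prod_pos fun i _ => hYpos i ω
  have hMmeasG : ∀ n, Measurable[G n] (M n) := by
    intro n
    apply Finset.measurable_prod
    intro i hi
    exact (hYmeasG i).mono (G.mono (Finset.mem_range.1 hi)) le_rfl
  have hMsucc : ∀ n ω, M (n+1) ω = M n ω * Y n ω := fun n ω => Finset.prod_range_succ _ _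
  have hMl : ∀ n, ∫⁻ ω, ENNReal.ofReal (M n ω) ∂ℙ ≤ 1 := by
    intro n
    induction n with
    | zero => simp [hM_def]
    | succ n ih =>
      have hk := key n (fun ω => ENNReal.ofReal (M n ω))
        (ENNReal.measurable_ofReal.comp (hMmeasG n))
      calc ∫⁻ ω, ENNReal.ofReal (M (n+1) ω) ∂ℙ
          = ∫⁻ ω, ENNReal.ofReal (M n ω) * ENNReal.ofReal (Y n ω) ∂ℙ := by
            apply lintegral_congr; intro ω
            rw [hMsucc n ω, ENNReal.ofReal_mul (hMpos n ω).le]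
        _ ≤ ∫⁻ ω, ENNReal.ofReal (M n ω) ∂ℙ := hk
        _ ≤ 1 := ih
  have hMint : ∀ n, Integrable (M n) ℙ := by
    intro n
    refine ⟨((hMmeasG n).mono (G.le n) le_rfl).aestronglyMeasurable, ?_⟩
    rw [hasFiniteIntegral_iff_ofReal (ae_of_all _ fun ω => (hMpos n ω).le)]
    exact lt_of_le_of_lt (hMl n) ENNReal.one_lt_top
  have hstep : ∀ n (s : Set Ω), MeasurableSet[G n] s →
      ∫ ω in s, M (n+1) ω ∂ℙ ≤ ∫ ω in s, M n ω ∂ℙ := by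
    intro n s hs
    have hl : ∫⁻ ω in s, ENNReal.ofReal (M (n+1) ω) ∂ℙ
        ≤ ∫⁻ ω in s, ENNReal.ofReal (M n ω) ∂ℙ := by
      have hk := key n (s.indicator (fun ω => ENNReal.ofReal (M n ω)))
        ((ENNReal.measurable_ofReal.comp (hMmeasG n)).indicator hs)
      have e1 : (fun ω => s.indicator (fun ω => ENNReal.ofReal (M n ω)) ω
          * ENNReal.ofReal (Y n ω))
          = s.indicator (fun ω => ENNReal.ofReal (M (n+1) ω)) := by
        funext ω
        by_cases hω : ω ∈ s
        · simp [Set.indicator_of_mem, hω, hMsucc n ω, ENNReal.ofReal_mul (hMpos n ω).le]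
        · simp [Set.indicator_of_notMem, hω]
      rw [show (∫⁻ ω, s.indicator (fun ω => ENNReal.ofReal (M n ω)) ω
          * ENNReal.ofReal (Y n ω) ∂ℙ)
          = ∫⁻ ω, s.indicator (fun ω => ENNReal.ofReal (M (n+1) ω)) ω ∂ℙ from by rw [← e1]]
          at hk
      rwa [lintegral_indicator (G.le n s hs) _, lintegral_indicator (G.le n s hs) _] at hk
    have i1 : ∫ ω in s, M (n+1) ω ∂ℙ
        = (∫⁻ ω in s, ENNReal.ofReal (M (n+1) ω) ∂ℙ).toReal :=
      integral_eq_lintegral_of_nonneg_ae (ae_of_all _ fun ω => (hMpos _ ω).le)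
        (((hMmeasG _).mono (G.le _) le_rfl).aestronglyMeasurable)
    have i2 : ∫ ω in s, M n ω ∂ℙ
        = (∫⁻ ω in s, ENNReal.ofReal (M n ω) ∂ℙ).toReal :=
      integral_eq_lintegral_of_nonneg_ae (ae_of_all _ fun ω => (hMpos _ ω).le)
        (((hMmeasG _).mono (G.le _) le_rfl).aestronglyMeasurable)
    rw [i1, i2]
    apply ENNReal.toReal_mono _ hl
    exact ((lintegral_mono' Measure.restrict_le_self le_rfl).trans (hMl n)).trans_lt
      ENNReal.one_lt_top |>.ne
  have hadp : Adapted G M := fun n => hMmeasG n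
  have hsub : Submartingale (fun n => -(M n)) G ℙ := by
    refine submartingale_of_setIntegral_le_succ (fun n => (hadp n).neg.stronglyMeasurable)
      (fun n => (hMint n).neg) ?_
    intro n s hs
    simp only [Pi.neg_apply]
    rw [integral_neg, integral_neg]
    exact neg_le_neg (hstep n s hs)
  have hδ' : (0:ℝ) < 1/δ := by positivity
  -- Ville's inequality, finite horizon
  have ville : ∀ n : ℕ, ℙ {ω | ∃ k, k ≤ n ∧ (1/δ) ≤ M k ω} ≤ ENNReal.ofReal δ := by
    intro n
    set B := {ω | ∃ k, k ≤ n ∧ (1/δ) ≤ M k ω} with hB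
    have hBmeas : MeasurableSet B := by
      have hBeq : B = ⋃ k, ⋃ _ : k ≤ n, {ω | 1/δ ≤ M k ω} := by
        ext ω; simp [hB]
      rw [hBeq]
      exact MeasurableSet.iUnion fun k => MeasurableSet.iUnion fun _ =>
        measurableSet_le measurable_const ((hMmeasG k).mono (G.le k) le_rfl)
    set τ := fun ω => ((hittingBtwn M (Set.Ici (1/δ)) 0 n ω : ℕ) : WithTop ℕ) with hτdef
    have hτstop : IsStoppingTime G τ := hadp.isStoppingTime_hittingBtwn measurableSet_Ici
    have hτle : ∀ ω, τ ω ≤ n := fun ω => WithTop.coe_le_coe.2 (hittingBtwn_le ω)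
    have hsveq : stoppedValue (fun n => -(M n)) τ = fun ω => -(stoppedValue M τ ω) := rfl
    have hsvint : Integrable (stoppedValue M τ) ℙ := by
      have h := hsub.integrable_stoppedValue hτstop hτle
      have he : stoppedValue (fun n => -(M n)) τ = -(stoppedValue M τ) := rfl
      rw [he] at h
      exact integrable_neg_iff.1 h
    have hexp : ∫ ω, stoppedValue M τ ω ∂ℙ ≤ 1 := by
      have h0 := hsub.expected_stoppedValue_mono (isStoppingTime_const G 0) hτstop
        (fun ω => WithTop.coe_le_coe.2 (Nat.zero_le _)) hτle
      have e0 : stoppedValue (fun n => -(M n)) (fun _ => (0:ℕ)) = fun ω => -(M 0 ω) := rfl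
      simp only [stoppedValue_const, Pi.neg_apply] at h0
      rw [hsveq, integral_neg, integral_neg] at h0
      have hM0 : (fun ω => M 0 ω) = fun _ => (1:ℝ) := by
        funext ω; simp [hM_def]
      have : ∫ ω, M 0 ω ∂ℙ = 1 := by rw [hM0]; simp
      have h1 : ∫ ω, stoppedValue M τ ω ∂ℙ ≤ ∫ ω, M 0 ω ∂ℙ := by linarith
      linarith
    have h1 : 1/δ * (ℙ B).toReal ≤ ∫ ω in B, stoppedValue M τ ω ∂ℙ := by
      rw [mul_comm, ← smul_eq_mul]
      apply setIntegral_ge_of_const_le hBmeas (measure_ne_top _ _)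
      · intro ω hω
        obtain ⟨k, hk, hMk⟩ := hω
        have := stoppedValue_hittingBtwn_mem (u := M) (s := Set.Ici (1/δ)) (n := 0) (m := n)
          ⟨k, ⟨Nat.zero_le _, hk⟩, hMk⟩
        exact this
      · exact hsvint.integrableOn
    have h2 : ∫ ω in B, stoppedValue M τ ω ∂ℙ ≤ ∫ ω, stoppedValue M τ ω ∂ℙ :=
      setIntegral_le_integral hsvint (ae_of_all _ fun ω => (hMpos _ ω).le)
    have h3 : (ℙ B).toReal ≤ δ := by
      have h4 : 1/δ * (ℙ B).toReal ≤ 1 := by linarith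
      calc (ℙ B).toReal = δ * (1/δ * (ℙ B).toReal) := by field_simp
        _ ≤ δ * 1 := by apply mul_le_mul_of_nonneg_left h4 hδ0.le
        _ = δ := mul_one δ
    rw [← ENNReal.ofReal_toReal (measure_ne_top ℙ B)]
    exact ENNReal.ofReal_le_ofReal h3
  -- pass to the infinite horizon
  set Bn : ℕ → Set Ω := fun n => {ω | ∃ k, k ≤ n ∧ (1/δ) ≤ M k ω} with hBn_def
  have hBmono : Monotone Bn := by
    intro m n hmn ω hω
    obtain ⟨k, hk, h⟩ := hω
    exact ⟨k, hk.trans hmn, h⟩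
  have hBtot : ℙ (⋃ n, Bn n) ≤ ENNReal.ofReal δ := by
    rw [hBmono.measure_iUnion]
    exact iSup_le ville
  have hBUmeas : MeasurableSet (⋃ n, Bn n) := by
    apply MeasurableSet.iUnion
    intro n
    have hBeq : Bn n = ⋃ k, ⋃ _ : k ≤ n, {ω | 1/δ ≤ M k ω} := by
      ext ω; simp [hBn_def]
    rw [hBeq]
    exact MeasurableSet.iUnion fun k => MeasurableSet.iUnion fun _ =>
      measurableSet_le measurable_const ((hMmeasG k).mono (G.le k) le_rfl)
  have hsubset : (⋃ n, Bn n)ᶜ ⊆ {ω | ∀ n : ℕ,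
      ∑ i ∈ Finset.range (n + 1), (L i ω : ℝ) * X i ω
        ≤ (5 / χ) * (∑ i ∈ Finset.range (n + 1), X i ω + Real.log (1 / δ))} := by
    intro ω hω n
    have hno : ∀ k, M k ω < 1/δ := by
      intro k
      by_contra hcon
      push_neg at hcon
      exact hω (Set.mem_iUnion.2 ⟨k, ⟨k, le_rfl, hcon⟩⟩)
    have hMn := hno (n+1)
    have hMexp : M (n+1) ω
        = Real.exp (∑ i ∈ range (n+1), (lam * ((L i ω : ℝ) * X i ω) - X i ω)) := by
      rw [hM_def, hY_def, Real.exp_sum]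
    rw [hMexp] at hMn
    have hlog : ∑ i ∈ range (n+1), (lam * ((L i ω : ℝ) * X i ω) - X i ω) < Real.log (1/δ) := by
      apply (Real.exp_lt_exp).1
      rwa [Real.exp_log hδ']
    rw [Finset.sum_sub_distrib, ← Finset.mul_sum] at hlog
    have h5 : (5/χ) * lam = 1 := by rw [hlam_def]; field_simp
    have hpos : (0:ℝ) < 5/χ := by positivity
    have h6 : lam * (∑ i ∈ range (n+1), (L i ω : ℝ) * X i ω)
        < ∑ i ∈ range (n+1), X i ω + Real.log (1/δ) := by linarith
    have h7 := mul_lt_mul_of_pos_left h6 hpos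
    calc ∑ i ∈ Finset.range (n + 1), (L i ω : ℝ) * X i ω
        = (5/χ) * (lam * (∑ i ∈ range (n+1), (L i ω : ℝ) * X i ω)) := by
          rw [← mul_assoc, h5, one_mul]
      _ ≤ (5 / χ) * (∑ i ∈ Finset.range (n + 1), X i ω + Real.log (1 / δ)) := h7.le
  calc ENNReal.ofReal (1 - δ) = 1 - ENNReal.ofReal δ := by
        rw [ENNReal.ofReal_sub _ hδ0.le, ENNReal.ofReal_one]
    _ ≤ 1 - ℙ (⋃ n, Bn n) := by
        exact tsub_le_tsub_left hBtot 1
    _ = ℙ ((⋃ n, Bn n)ᶜ) := by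
        rw [measure_compl hBUmeas (measure_ne_top _ _), measure_univ]
    _ ≤ _ := measure_mono hsubset
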